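/- arXiv:1503.07811 — 2 statements merged into one kernel-verified Lean document; each statement's English description precedes it below -/
import Mathlib

section
/- Let a ∈ ℂ with Re(a) ≥ 0 and Im(a) > 0, h > 0, and set α = 2a + (h²/3)a² and β = 2Re(a) + (h²/3)|a|². Then α ≠ 0 and μ := β/|α| satisfies −1 < μ < 1. -/
/-- For a with Re a ≥ 0, Im a > 0 and h > 0, α = 2a + (h²/3)a² ≠ 0 and
μ = β/|α| with β = 2Re a + (h²/3)|a|² satisfies −1 < μ < 1. -/
theorem stmt_10 (a : ℂ) (ha_re : 0 ≤ a.re) (ha_im : 0 < a.im) (h : ℝ) (hh : 0 < h) :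
    (2 * a + (h ^ 2 / 3 : ℂ) * a ^ 2) ≠ 0 ∧
      -1 < (2 * a.re + h ^ 2 / 3 * ‖a‖ ^ 2)
              / ‖2 * a + (h ^ 2 / 3 : ℂ) * a ^ 2‖ ∧
        (2 * a.re + h ^ 2 / 3 * ‖a‖ ^ 2)
              / ‖2 * a + (h ^ 2 / 3 : ℂ) * a ^ 2‖ < 1 := by
  set α : ℂ := 2 * a + (h ^ 2 / 3 : ℂ) * a ^ 2 with hα
  have habs : ‖a‖ ^ 2 = a.re ^ 2 + a.im ^ 2 := by
    rw [Complex.sq_norm, Complex.normSq_apply]; ring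
  set β : ℝ := 2 * a.re + h ^ 2 / 3 * ‖a‖ ^ 2 with hβ
  have hre : α.re = 2 * a.re + h ^ 2 / 3 * (a.re ^ 2 - a.im ^ 2) := by
    simp [hα, pow_two, Complex.add_re, Complex.mul_re, Complex.mul_im,
      Complex.div_re, Complex.div_im, Complex.normSq_apply]
  have him : α.im = 2 * a.im + h ^ 2 / 3 * (2 * a.re * a.im) := by
    simp [hα, pow_two, Complex.add_im, Complex.mul_re, Complex.mul_im,
      Complex.div_re, Complex.div_im, Complex.normSq_apply]
    all_goals try ring
    all_goals tauto
  have key : ‖α‖ ^ 2 = β ^ 2 + 4 * a.im ^ 2 := by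
    rw [Complex.sq_norm, Complex.normSq_apply, hre, him, hβ, habs]
    ring
  have hβ0 : 0 ≤ β := by
    have : 0 < ‖a‖ ^ 2 := by
      rw [habs]; positivity
    have : 0 ≤ h ^ 2 / 3 * ‖a‖ ^ 2 := by positivity
    rw [hβ]; linarith
  have hA0 : 0 ≤ ‖α‖ := norm_nonneg _
  have hlt : β < ‖α‖ := by nlinarith [sq_nonneg a.im, ha_im]
  have hApos : 0 < ‖α‖ := lt_of_le_of_lt hβ0 hlt
  refine ⟨by simpa using norm_ne_zero_iff.mp (ne_of_gt hApos), ?_, ?_⟩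
  · have : (0:ℝ) ≤ β / ‖α‖ := div_nonneg hβ0 hA0
    linarith
  · exact (div_lt_one hApos).mpr hlt
end

section
/- Let H be a complex Hilbert space, A a bounded self-adjoint operator with A ≥ δ̂ I for some δ̂ > 0, and consider the Crank–Nicolson scheme iħ ∂̄_t Ψ^m = A s̄_t Ψ^m + F^m on a uniform mesh with step τ, where ∂̄_t Ψ^m = (Ψ^m − Ψ^{m−1})/τ and s̄_t Ψ^m = (Ψ^m + Ψ^{m−1})/2. Then in the energy norm ‖w‖_E = ⟨Aw,w⟩^{1/2}: max_{0≤m≤M} ‖Ψ^m‖_E ≤ ‖Ψ^0‖_E + 4 Σ_{m=1}^M ‖∂̄_t F^m‖_{E*} τ + 4‖F^0‖_{E*}, where ‖w‖_{E*} = sup{|⟨w,φ⟩| : ‖φ‖_E = 1} and F^0 ∈ H is arbitrary. -/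
open Finset
open scoped InnerProductSpace

/-- Second (energy) stability bound for the Crank–Nicolson scheme
iħ ∂̄_t Ψ^m = A s̄_t Ψ^m + F^m with bounded self-adjoint coercive A:
max_m ‖Ψ^m‖_E ≤ ‖Ψ^0‖_E + 4 Σ ‖∂̄_t F^m‖_{E*} τ + 4 ‖F^0‖_{E*}. -/
theorem stmt_19 {H : Type*} [NormedAddCommGroup H] [InnerProductSpace ℂ H] [CompleteSpace H]
    (A : H →L[ℂ] H) (hA : IsSelfAdjoint A)
    (δhat : ℝ) (hδ : 0 < δhat) (hcoerc : ∀ x : H, δhat * ‖x‖ ^ 2 ≤ (⟪A x, x⟫_ℂ).re)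
    (hbar τ : ℝ) (hhbar : 0 < hbar) (hτ : 0 < τ) (M : ℕ) (Ψ F : ℕ → H)
    (scheme : ∀ m, 1 ≤ m → m ≤ M →
      ((Complex.I * hbar / τ) : ℂ) • (Ψ m - Ψ (m - 1))
        = A ((1 / 2 : ℂ) • (Ψ m + Ψ (m - 1))) + F m)
    (normE : H → ℝ) (hnormE : ∀ w, normE w = Real.sqrt ((⟪A w, w⟫_ℂ).re))
    (normEstar : H → ℝ)
    (hnormEstar : ∀ w,
      normEstar w = sSup {r : ℝ | ∃ φ : H, normE φ = 1 ∧ r = ‖⟪w, φ⟫_ℂ‖}) :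
    ∀ m ≤ M,
      normE (Ψ m)
        ≤ normE (Ψ 0)
          + 4 * ∑ k ∈ Finset.Icc 1 M, normEstar ((τ⁻¹ : ℂ) • (F k - F (k - 1))) * τ
          + 4 * normEstar (F 0) := by
  have hAsym : ∀ x y : H, ⟪A x, y⟫_ℂ = ⟪x, A y⟫_ℂ := by
    intro x y
    conv_lhs => rw [← hA.adjoint_eq]
    exact ContinuousLinearMap.adjoint_inner_left A y x
  have hre_nonneg : ∀ w : H, 0 ≤ (⟪A w, w⟫_ℂ).re := fun w =>
    le_trans (by positivity) (hcoerc w)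
  have hE_sq : ∀ w, normE w ^ 2 = (⟪A w, w⟫_ℂ).re := fun w => by
    rw [hnormE]; exact Real.sq_sqrt (hre_nonneg w)
  have hE_nonneg : ∀ w, 0 ≤ normE w := fun w => by
    rw [hnormE]; exact Real.sqrt_nonneg _
  have hE_zero : ∀ w, normE w = 0 → w = 0 := by
    intro w h
    have h2 : (⟪A w, w⟫_ℂ).re = 0 := by
      have := hE_sq w; rw [h] at this; simpa using this.symm
    have h3 := hcoerc w
    rw [h2] at h3
    by_contra hw
    have hpos : 0 < ‖w‖ := norm_pos_iff.mpr hw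
    nlinarith [mul_pos hδ (pow_pos hpos 2)]
  have hbdd : ∀ w : H,
      BddAbove {r : ℝ | ∃ φ : H, normE φ = 1 ∧ r = ‖⟪w, φ⟫_ℂ‖} := by
    intro w
    refine ⟨‖w‖ * Real.sqrt δhat⁻¹, ?_⟩
    rintro r ⟨φ, hφ, rfl⟩
    have h1 : (⟪A φ, φ⟫_ℂ).re = 1 := by
      have h := hnormE φ; rw [hφ] at h; exact Real.sqrt_eq_one.mp h.symm
    have h3 : ‖φ‖ ^ 2 ≤ δhat⁻¹ := by
      have h4 := hcoerc φ
      rw [h1] at h4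
      calc ‖φ‖ ^ 2 = δhat⁻¹ * (δhat * ‖φ‖ ^ 2) := by field_simp
        _ ≤ δhat⁻¹ * 1 := mul_le_mul_of_nonneg_left h4 (inv_nonneg.mpr hδ.le)
        _ = δhat⁻¹ := mul_one _
    have h2 : ‖φ‖ ≤ Real.sqrt δhat⁻¹ := by
      calc ‖φ‖ = Real.sqrt (‖φ‖ ^ 2) := (Real.sqrt_sq (norm_nonneg φ)).symm
        _ ≤ Real.sqrt δhat⁻¹ := Real.sqrt_le_sqrt h3
    have h5 : ‖⟪w, φ⟫_ℂ‖ ≤ ‖w‖ * ‖φ‖ := by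
      have := norm_inner_le_norm (𝕜 := ℂ) w φ
      exact this
    exact h5.trans (mul_le_mul_of_nonneg_left h2 (norm_nonneg w))
  have hstar_nonneg : ∀ w, 0 ≤ normEstar w := fun w => by
    rw [hnormEstar]
    exact Real.sSup_nonneg (by rintro r ⟨φ, _, rfl⟩; exact norm_nonneg _)
  have hdual : ∀ w φ : H, ‖⟪w, φ⟫_ℂ‖ ≤ normEstar w * normE φ := by
    intro w φ
    rcases eq_or_ne φ 0 with rfl | hφ
    · have hE0 : normE 0 = 0 := by
        rw [hnormE]; simp
      simp [hE0]
    · set c := normE φ with hc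
      have hcpos : 0 < c := lt_of_le_of_ne (hE_nonneg φ) fun h => hφ (hE_zero φ h.symm)
      set ψ : H := ((c⁻¹ : ℝ) : ℂ) • φ with hψ
      have hinner : ⟪A ψ, ψ⟫_ℂ = (((c⁻¹ : ℝ) ^ 2 : ℝ) : ℂ) * ⟪A φ, φ⟫_ℂ := by
        rw [hψ, map_smul, inner_smul_left, inner_smul_right, Complex.conj_ofReal]
        push_cast
        ring
      have hψE : normE ψ = 1 := by
        rw [hnormE, hinner, Complex.re_ofReal_mul, ← hE_sq φ, ← hc]
        rw [show (c⁻¹) ^ 2 * c ^ 2 = 1 by field_simp]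
        exact Real.sqrt_one
      have hle : ‖⟪w, ψ⟫_ℂ‖ ≤ normEstar w := by
        rw [hnormEstar]
        exact le_csSup (hbdd w) ⟨ψ, hψE, rfl⟩
      have habs : ‖⟪w, ψ⟫_ℂ‖ = c⁻¹ * ‖⟪w, φ⟫_ℂ‖ := by
        rw [hψ, inner_smul_right, norm_mul, Complex.norm_real, Real.norm_eq_abs,
          abs_of_pos (inv_pos.mpr hcpos)]
      rw [habs] at hle
      calc ‖⟪w, φ⟫_ℂ‖ = (c⁻¹ * ‖⟪w, φ⟫_ℂ‖) * c := by field_simp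
        _ ≤ normEstar w * c := mul_le_mul_of_nonneg_right hle hcpos.le
  -- the difference quotients
  set g : ℕ → ℝ := fun m => normEstar ((τ⁻¹ : ℂ) • (F m - F (m - 1))) * τ with hg
  have hg_nonneg : ∀ m, 0 ≤ g m := fun m => mul_nonneg (hstar_nonneg _) hτ.le
  have hτℂ : (τ : ℂ) ≠ 0 := Complex.ofReal_ne_zero.mpr hτ.ne'
  have hgd : ∀ m, ∀ φ : H, ‖⟪F m - F (m - 1), φ⟫_ℂ‖ ≤ g m * normE φ := by
    intro m φ
    have hv : F m - F (m - 1) = (τ : ℂ) • ((τ⁻¹ : ℂ) • (F m - F (m - 1))) := by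
      rw [smul_smul]
      rw [show (τ : ℂ) * (τ⁻¹ : ℂ) = 1 by
        push_cast; field_simp]
      rw [one_smul]
    calc ‖⟪F m - F (m - 1), φ⟫_ℂ‖
        = τ * ‖⟪(τ⁻¹ : ℂ) • (F m - F (m - 1)), φ⟫_ℂ‖ := by
          conv_lhs => rw [hv]
          rw [inner_smul_left, norm_mul]
          simp only [Complex.norm_conj, Complex.norm_real, Real.norm_eq_abs, abs_of_pos hτ]
      _ ≤ τ * (normEstar ((τ⁻¹ : ℂ) • (F m - F (m - 1))) * normE φ) :=
          mul_le_mul_of_nonneg_left (hdual _ _) hτ.le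
      _ = g m * normE φ := by rw [hg]; ring
  have hFnd : ∀ n, ∀ φ : H,
      ‖⟪F n, φ⟫_ℂ‖ ≤ (normEstar (F 0) + ∑ m ∈ Icc 1 n, g m) * normE φ := by
    intro n
    induction n with
    | zero => intro φ; simpa using hdual (F 0) φ
    | succ n ih =>
      intro φ
      have hsplit : ⟪F (n + 1), φ⟫_ℂ = ⟪F n, φ⟫_ℂ + ⟪F (n + 1) - F n, φ⟫_ℂ := by
        rw [inner_sub_left]; ring
      rw [hsplit]
      calc ‖⟪F n, φ⟫_ℂ + ⟪F (n + 1) - F n, φ⟫_ℂ‖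
          ≤ ‖⟪F n, φ⟫_ℂ‖ + ‖⟪F (n + 1) - F n, φ⟫_ℂ‖ :=
            norm_add_le _ _
        _ ≤ (normEstar (F 0) + ∑ m ∈ Icc 1 n, g m) * normE φ + g (n + 1) * normE φ := by
            refine add_le_add (ih φ) ?_
            have := hgd (n + 1) φ
            simpa using this
        _ = (normEstar (F 0) + ∑ m ∈ Icc 1 (n + 1), g m) * normE φ := by
            rw [Finset.sum_Icc_succ_top (by omega)]; ring
  -- energy
  set E : ℕ → ℝ := fun n => (⟪A (Ψ n), Ψ n⟫_ℂ).re with hEdef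
  have hstep : ∀ m, 1 ≤ m → m ≤ M →
      E m = E (m - 1) - 2 * (⟪F m, Ψ m - Ψ (m - 1)⟫_ℂ).re := by
    intro m h1 h2
    have hs := scheme m h1 h2
    set d := Ψ m - Ψ (m - 1) with hd
    set p := Ψ (m - 1) with hp
    have hinner := congrArg (fun x => (⟪d, x⟫_ℂ).re) hs
    have hL : (⟪d, ((Complex.I * hbar / τ) : ℂ) • d⟫_ℂ).re = 0 := by
      rw [inner_smul_right]
      have hz : ⟪d, d⟫_ℂ = ((‖d‖ ^ 2 : ℝ) : ℂ) := by
        rw [inner_self_eq_norm_sq_to_K]; norm_cast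
      rw [hz]
      simp [Complex.div_re, Complex.mul_re, Complex.mul_im]
      right
      simp [pow_two, Complex.mul_im]
    have hconj1 : (⟪Ψ m, A (Ψ m)⟫_ℂ).re = E m := by
      rw [← inner_conj_symm, Complex.conj_re]
    have hconj2 : (⟪p, A p⟫_ℂ).re = E (m - 1) := by
      rw [← inner_conj_symm, Complex.conj_re]
    have him : (⟪Ψ m, A p⟫_ℂ - ⟪p, A (Ψ m)⟫_ℂ).re = 0 := by
      have h : ⟪Ψ m, A p⟫_ℂ = (starRingEnd ℂ) ⟪p, A (Ψ m)⟫_ℂ := by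
        rw [← hAsym (Ψ m) p, ← inner_conj_symm]
      rw [Complex.sub_re, h, Complex.conj_re]
      ring
    have hR1 : (⟪d, A ((1 / 2 : ℂ) • (Ψ m + p))⟫_ℂ).re = (E m - E (m - 1)) / 2 := by
      rw [map_smul, inner_smul_right]
      have hexp : ⟪d, A (Ψ m + p)⟫_ℂ
          = (⟪Ψ m, A (Ψ m)⟫_ℂ - ⟪p, A p⟫_ℂ) + (⟪Ψ m, A p⟫_ℂ - ⟪p, A (Ψ m)⟫_ℂ) := by
        rw [hd, map_add, inner_sub_left, inner_add_right, inner_add_right]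
        ring
      rw [show ((1 : ℂ) / 2) = (((1 / 2 : ℝ)) : ℂ) by norm_num, Complex.re_ofReal_mul,
        hexp, Complex.add_re, Complex.sub_re, hconj1, hconj2, him]
      ring
    have hR2 : (⟪d, F m⟫_ℂ).re = (⟪F m, d⟫_ℂ).re := by
      rw [← inner_conj_symm, Complex.conj_re]
    rw [hL, inner_add_right, Complex.add_re, hR1, hR2] at hinner
    linarith
  have htel : ∀ n, n ≤ M →
      E n = E 0 - 2 * ∑ m ∈ Icc 1 n, (⟪F m, Ψ m - Ψ (m - 1)⟫_ℂ).re := by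
    intro n
    induction n with
    | zero => intro _; simp
    | succ n ih =>
      intro h
      rw [Finset.sum_Icc_succ_top (by omega), hstep (n + 1) (by omega) h,
        Nat.add_sub_cancel, ih (by omega)]
      ring
  have habel : ∀ n, ∑ m ∈ Icc 1 n, ⟪F m, Ψ m - Ψ (m - 1)⟫_ℂ
      = ⟪F n, Ψ n⟫_ℂ - ⟪F 0, Ψ 0⟫_ℂ - ∑ m ∈ Icc 1 n, ⟪F m - F (m - 1), Ψ (m - 1)⟫_ℂ := by
    intro n
    induction n with
    | zero => simp
    | succ n ih =>
      rw [Finset.sum_Icc_succ_top (by omega), Finset.sum_Icc_succ_top (by omega), ih]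
      simp only [Nat.add_sub_cancel]
      rw [inner_sub_left, inner_sub_right]
      ring
  -- the max
  have hne : (Finset.range (M + 1)).Nonempty := ⟨0, by simp⟩
  set Y := (Finset.range (M + 1)).sup' hne fun k => normE (Ψ k) with hYdef
  have hYle : ∀ k, k ≤ M → normE (Ψ k) ≤ Y := by
    intro k hk
    exact Finset.le_sup' (fun k => normE (Ψ k)) (Finset.mem_range.mpr (by omega))
  have hY0 : 0 ≤ Y := le_trans (hE_nonneg (Ψ 0)) (hYle 0 (Nat.zero_le M))
  obtain ⟨n₀, hn₀mem, hn₀⟩ := Finset.exists_mem_eq_sup' hne fun k => normE (Ψ k)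
  have hn₀M : n₀ ≤ M := by
    have := Finset.mem_range.mp hn₀mem; omega
  set G0 := normEstar (F 0) with hG0def
  set S := ∑ k ∈ Icc 1 M, g k with hSdef
  have hS_nonneg : 0 ≤ S := Finset.sum_nonneg fun i _ => hg_nonneg i
  have hG0 : 0 ≤ G0 := hstar_nonneg _
  have hsubsum : ∀ n, n ≤ M → ∑ m ∈ Icc 1 n, g m ≤ S := by
    intro n hn
    exact Finset.sum_le_sum_of_subset_of_nonneg
      (Finset.Icc_subset_Icc_right hn) (fun i _ _ => hg_nonneg i)
  -- key inequality: Y * Y ≤ R * Y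
  have hn₀' : Y = normE (Ψ n₀) := by rw [hYdef]; exact hn₀
  have key : Y * Y ≤ (normE (Ψ 0) + 4 * S + 4 * G0) * Y := by
    have hYsq : Y * Y = E n₀ := by
      rw [hn₀', ← sq, hE_sq (Ψ n₀)]
    have h1 := htel n₀ hn₀M
    have h2 : ∑ m ∈ Icc 1 n₀, (⟪F m, Ψ m - Ψ (m - 1)⟫_ℂ).re
        = (⟪F n₀, Ψ n₀⟫_ℂ).re - (⟪F 0, Ψ 0⟫_ℂ).re
          - ∑ m ∈ Icc 1 n₀, (⟪F m - F (m - 1), Ψ (m - 1)⟫_ℂ).re := by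
      rw [← Complex.re_sum, habel n₀, Complex.sub_re, Complex.sub_re, Complex.re_sum]
    -- bound each piece
    have b1 : -(⟪F n₀, Ψ n₀⟫_ℂ).re ≤ (G0 + S) * Y := by
      have ha : -(⟪F n₀, Ψ n₀⟫_ℂ).re ≤ ‖⟪F n₀, Ψ n₀⟫_ℂ‖ := by
        have := Complex.abs_re_le_norm ⟪F n₀, Ψ n₀⟫_ℂ
        have := neg_abs_le (⟪F n₀, Ψ n₀⟫_ℂ).re
        linarith [abs_nonneg (⟪F n₀, Ψ n₀⟫_ℂ).re, Complex.abs_re_le_norm ⟪F n₀, Ψ n₀⟫_ℂ,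
          neg_le_abs (⟪F n₀, Ψ n₀⟫_ℂ).re]
      refine ha.trans ?_
      have := hFnd n₀ (Ψ n₀)
      refine this.trans ?_
      have hsum := hsubsum n₀ hn₀M
      have hEn := hYle n₀ hn₀M
      have h0 : 0 ≤ normE (Ψ n₀) := hE_nonneg _
      have h0' : 0 ≤ normEstar (F 0) + ∑ m ∈ Icc 1 n₀, g m :=
        add_nonneg (hstar_nonneg _) (Finset.sum_nonneg fun i _ => hg_nonneg i)
      calc (normEstar (F 0) + ∑ m ∈ Icc 1 n₀, g m) * normE (Ψ n₀)
          ≤ (G0 + S) * normE (Ψ n₀) := by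
            apply mul_le_mul_of_nonneg_right _ h0
            exact add_le_add le_rfl hsum
        _ ≤ (G0 + S) * Y := by
            apply mul_le_mul_of_nonneg_left hEn (by linarith)
    have b2 : (⟪F 0, Ψ 0⟫_ℂ).re ≤ G0 * Y := by
      refine (Complex.re_le_norm _).trans ?_
      refine (hdual (F 0) (Ψ 0)).trans ?_
      exact mul_le_mul_of_nonneg_left (hYle 0 (Nat.zero_le M)) hG0
    have b3 : ∑ m ∈ Icc 1 n₀, (⟪F m - F (m - 1), Ψ (m - 1)⟫_ℂ).re ≤ S * Y := by
      calc ∑ m ∈ Icc 1 n₀, (⟪F m - F (m - 1), Ψ (m - 1)⟫_ℂ).re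
          ≤ ∑ m ∈ Icc 1 n₀, g m * Y := by
            apply Finset.sum_le_sum
            intro m hm
            have hmM : m - 1 ≤ M := by
              have := (Finset.mem_Icc.mp hm).2; omega
            refine (Complex.re_le_norm _).trans ?_
            refine (hgd m (Ψ (m - 1))).trans ?_
            exact mul_le_mul_of_nonneg_left (hYle (m - 1) hmM) (hg_nonneg m)
        _ = (∑ m ∈ Icc 1 n₀, g m) * Y := by rw [Finset.sum_mul]
        _ ≤ S * Y := mul_le_mul_of_nonneg_right (hsubsum n₀ hn₀M) hY0
    have b0 : E 0 ≤ normE (Ψ 0) * Y := by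
      have : E 0 = normE (Ψ 0) ^ 2 := (hE_sq (Ψ 0)).symm
      rw [this, sq]
      exact mul_le_mul_of_nonneg_left (hYle 0 (Nat.zero_le M)) (hE_nonneg _)
    rw [hYsq, h1, h2]
    ring_nf
    nlinarith [b0, b1, b2, b3]
  intro m hm
  have h1 : normE (Ψ m) ≤ Y := hYle m hm
  rcases eq_or_lt_of_le hY0 with h0 | h0
  · have h2 : normE (Ψ m) ≤ 0 := h1.trans h0.symm.le
    have hR0 : 0 ≤ normE (Ψ 0) + 4 * S + 4 * G0 := by
      linarith [hE_nonneg (Ψ 0), hS_nonneg, hG0]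
    calc normE (Ψ m) ≤ 0 := h2
      _ ≤ _ := hR0
  · have hYR : Y ≤ normE (Ψ 0) + 4 * S + 4 * G0 :=
      le_of_mul_le_mul_right (by linarith [key]) h0
    exact h1.trans hYR
end
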